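/- Let E be a directed graph, K a field, and x ∈ ∂E. The simple L_K(E)-module V_{[x]} admits a ℤ-grading making it a graded L_K(E)-module (i.e., a decomposition V_{[x]} = ⊕_{k∈ℤ} W_k into K-subspaces with (L_K(E))_m W_k ⊆ W_{m+k} for all m, k) if and only if x is not a rational path. -/

import Mathlib

open scoped Classical

/-- A directed graph: vertices, edges, source and range maps. -/
structure DirGraph : Type 1 where
  V : Type
  E : Type
  s : E → V
  r : E → V

namespace DirGraph

variable (G : DirGraph)

/-- A finite path: a source vertex together with a compatible list of edges
(the empty list gives the path of length 0 at `src`). -/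
structure FinPath where
  src : G.V
  edges : List G.E
  src_eq : ∀ e ∈ edges.head?, G.s e = src
  chain : edges.Chain' (fun e f => G.r e = G.s f)

variable {G}

/-- The range of a finite path. -/
def FinPath.rng (μ : G.FinPath) : G.V :=
  ((μ.edges.getLast?).map G.r).getD μ.src

/-- The length of a finite path. -/
def FinPath.length (μ : G.FinPath) : ℕ := μ.edges.length

variable (G)

/-- An infinite path. -/
structure InfPath where
  edges : ℕ → G.E
  chain : ∀ n, G.r (edges n) = G.s (edges (n + 1))

/-- The source of an infinite path. -/
def InfPath.src {G : DirGraph} (p : G.InfPath) : G.V := G.s (p.edges 0)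

def IsSink (v : G.V) : Prop := ∀ e, G.s e ≠ v

def IsInfEmitter (v : G.V) : Prop := {e | G.s e = v}.Infinite

def IsSingular (v : G.V) : Prop := IsSink G v ∨ IsInfEmitter G v

/-- Boundary paths: infinite paths, together with finite paths ending in a singular vertex. -/
def BPath : Type := {x : G.FinPath ⊕ G.InfPath // ∀ μ, x = Sum.inl μ → IsSingular G μ.rng}

variable {G}

/-- The source of a boundary path. -/
def BPath.src (x : G.BPath) : G.V :=
  match x.1 with
  | Sum.inl μ => μ.src
  | Sum.inr p => p.src

def BPath.IsInfinite (x : G.BPath) : Prop := ∃ p, x.1 = Sum.inr p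

/-- `IsCat μ p x` means `x = μ p`, i.e. `x` is the concatenation of the finite path `μ`
with the boundary path `p` (in particular `r(μ) = s(p)`). -/
def IsCat (μ : G.FinPath) (p x : G.BPath) : Prop :=
  μ.rng = p.src ∧
  match p.1, x.1 with
  | Sum.inl q, Sum.inl ξ => ξ.src = μ.src ∧ ξ.edges = μ.edges ++ q.edges
  | Sum.inr q, Sum.inr ξ =>
      (∀ (i : ℕ) (h : i < μ.edges.length), ξ.edges i = μ.edges.get ⟨i, h⟩) ∧
      (∀ i : ℕ, ξ.edges (μ.edges.length + i) = q.edges i)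
  | _, _ => False

/-- `x ∼_k y` : tail equivalence with lag `k`. -/
def TailEqLag (x y : G.BPath) (k : ℤ) : Prop :=
  ∃ (μ ν : G.FinPath) (p : G.BPath),
    IsCat μ p x ∧ IsCat ν p y ∧ (μ.length : ℤ) - (ν.length : ℤ) = k

/-- Tail equivalence. -/
def TailEq (x y : G.BPath) : Prop := ∃ k, TailEqLag x y k

/-- The tail-equivalence class (orbit) of a boundary path. -/
def orbit (x : G.BPath) : Set G.BPath := {y | TailEq y x}

/-- A closed path: positive length, same source and range. -/
def FinPath.IsClosed (c : G.FinPath) : Prop := 0 < c.length ∧ c.rng = c.src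

/-- A boundary path is rational if it is tail equivalent to `c^∞` for some closed path `c`;
here `c^∞` is characterized as the unique boundary path `p` with `p = c p`. -/
def IsRational (x : G.BPath) : Prop :=
  ∃ (c : G.FinPath) (p : G.BPath), 0 < c.length ∧ IsCat c p p ∧ TailEq x p

/-- A simple closed path: a closed path which is not a proper power of a closed path. -/
def FinPath.IsSimpleClosed (c : G.FinPath) : Prop :=
  c.IsClosed ∧
    ¬ ∃ (d : G.FinPath) (n : ℕ), 2 ≤ n ∧ d.IsClosed ∧ c.src = d.src ∧
        c.edges = (List.replicate n d.edges).flatten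

/-- A cycle: a closed path passing through no vertex twice. -/
def FinPath.IsCycle (c : G.FinPath) : Prop := c.IsClosed ∧ (c.edges.map G.s).Nodup

/-- An exit for a finite path. -/
def FinPath.HasExit (c : G.FinPath) : Prop :=
  ∃ (i : ℕ) (h : i < c.edges.length) (e : G.E),
    G.s e = G.s (c.edges.get ⟨i, h⟩) ∧ e ≠ c.edges.get ⟨i, h⟩

/-- `c` is a rotation of `d`. -/
def FinPath.IsRotationOf (c d : G.FinPath) : Prop := ∃ i, c.edges = d.edges.rotate i

/-- A maximal cycle: a cycle such that any cycle from which there is a finite path to its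
source is a rotation of it. -/
def FinPath.IsMaxCycle (c : G.FinPath) : Prop :=
  c.IsCycle ∧ ∀ d : G.FinPath, d.IsCycle →
    (∃ μ : G.FinPath, μ.src = d.src ∧ μ.rng = c.src) → d.IsRotationOf c

/-- A maximal sink: a sink with no finite path from the source of any cycle to it. -/
def IsMaxSink (G : DirGraph) (v : G.V) : Prop :=
  IsSink G v ∧ ¬ ∃ (d μ : G.FinPath), d.IsCycle ∧ μ.src = d.src ∧ μ.rng = v

/-- A graph is row-finite if every vertex emits finitely many edges. -/
def RowFinite (G : DirGraph) : Prop := ∀ v : G.V, {e | G.s e = v}.Finite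

/-- The set of predecessors of a vertex. -/
def preds (G : DirGraph) (v : G.V) : Set G.V := {w | ∃ μ : G.FinPath, μ.src = w ∧ μ.rng = v}

/-- The finite path of length 0 at a vertex. -/
def vertexPath (G : DirGraph) (v : G.V) : G.FinPath :=
  ⟨v, [], by intro e he; simp at he, List.isChain_nil⟩

/-- A singular vertex, seen as a boundary path. -/
def vertexBPath (G : DirGraph) (v : G.V) (h : IsSingular G v) : G.BPath :=
  ⟨Sum.inl (vertexPath G v), by
    intro μ hμ
    injection hμ with h2
    subst h2
    exact h⟩

/-- The finite path consisting of a single edge. -/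
def singleE (G : DirGraph) (e : G.E) : G.FinPath :=
  ⟨G.s e, [e], by
    intro f hf
    simp only [List.head?_cons, Option.mem_def, Option.some.injEq] at hf
    subst hf
    rfl, List.isChain_singleton e⟩

/-- `a_μ`: the product of the values of `a` along a finite path. -/
def aval {G : DirGraph} {K : Type} [Field K] (a : G.E → K) (μ : G.FinPath) : K :=
  (μ.edges.map a).prod

/-! ## The Leavitt path algebra -/

/-- Generators of the Leavitt path algebra: vertices, edges and ghost edges. -/
inductive Gen (G : DirGraph) : Type
  | vtx : G.V → Gen G
  | edg : G.E → Gen G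
  | ghd : G.E → Gen G

/-- The defining relations of the Leavitt path algebra. -/
inductive LRel (G : DirGraph) (K : Type) [Field K] :
    FreeAlgebra K (Gen G) → FreeAlgebra K (Gen G) → Prop
  | vv_eq (v : G.V) :
      LRel G K (FreeAlgebra.ι K (Gen.vtx v) * FreeAlgebra.ι K (Gen.vtx v))
        (FreeAlgebra.ι K (Gen.vtx v))
  | vv_ne {v w : G.V} (h : v ≠ w) :
      LRel G K (FreeAlgebra.ι K (Gen.vtx v) * FreeAlgebra.ι K (Gen.vtx w)) 0
  | e1l (e : G.E) :
      LRel G K (FreeAlgebra.ι K (Gen.vtx (G.s e)) * FreeAlgebra.ι K (Gen.edg e))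
        (FreeAlgebra.ι K (Gen.edg e))
  | e1r (e : G.E) :
      LRel G K (FreeAlgebra.ι K (Gen.edg e) * FreeAlgebra.ι K (Gen.vtx (G.r e)))
        (FreeAlgebra.ι K (Gen.edg e))
  | e2l (e : G.E) :
      LRel G K (FreeAlgebra.ι K (Gen.vtx (G.r e)) * FreeAlgebra.ι K (Gen.ghd e))
        (FreeAlgebra.ι K (Gen.ghd e))
  | e2r (e : G.E) :
      LRel G K (FreeAlgebra.ι K (Gen.ghd e) * FreeAlgebra.ι K (Gen.vtx (G.s e)))
        (FreeAlgebra.ι K (Gen.ghd e))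
  | ck1_eq (e : G.E) :
      LRel G K (FreeAlgebra.ι K (Gen.ghd e) * FreeAlgebra.ι K (Gen.edg e))
        (FreeAlgebra.ι K (Gen.vtx (G.r e)))
  | ck1_ne {e f : G.E} (h : e ≠ f) :
      LRel G K (FreeAlgebra.ι K (Gen.ghd e) * FreeAlgebra.ι K (Gen.edg f)) 0
  | ck2 (v : G.V) (hfin : {e | G.s e = v}.Finite) (hne : ∃ e, G.s e = v) :
      LRel G K (FreeAlgebra.ι K (Gen.vtx v))
        (∑ e ∈ hfin.toFinset, FreeAlgebra.ι K (Gen.edg e) * FreeAlgebra.ι K (Gen.ghd e))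

/-- The Leavitt path algebra of `G` over `K`. -/
abbrev LPA (G : DirGraph) (K : Type) [Field K] : Type := RingQuot (LRel G K)

/-- The image of a vertex in the Leavitt path algebra. -/
def ofV (G : DirGraph) (K : Type) [Field K] (v : G.V) : LPA G K :=
  RingQuot.mkAlgHom K (LRel G K) (FreeAlgebra.ι K (Gen.vtx v))

/-- The image of an edge in the Leavitt path algebra. -/
def ofE (G : DirGraph) (K : Type) [Field K] (e : G.E) : LPA G K :=
  RingQuot.mkAlgHom K (LRel G K) (FreeAlgebra.ι K (Gen.edg e))

/-- The image of a ghost edge in the Leavitt path algebra. -/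
def ofG (G : DirGraph) (K : Type) [Field K] (e : G.E) : LPA G K :=
  RingQuot.mkAlgHom K (LRel G K) (FreeAlgebra.ι K (Gen.ghd e))

/-- The element `μ` of the Leavitt path algebra associated to a finite path `μ`. -/
def pathElem (G : DirGraph) (K : Type) [Field K] (μ : G.FinPath) : LPA G K :=
  ofV G K μ.src * (μ.edges.map (ofE G K)).prod

/-- The element `μ^*` of the Leavitt path algebra associated to a finite path `μ`. -/
def pathStarElem (G : DirGraph) (K : Type) [Field K] (μ : G.FinPath) : LPA G K :=
  (μ.edges.reverse.map (ofG G K)).prod * ofV G K μ.src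

/-- The degree-`n` homogeneous component of the canonical `ℤ`-grading of the Leavitt
path algebra: the span of the monomials `μ ν^*` with `|μ| - |ν| = n`. -/
def LPAdeg (G : DirGraph) (K : Type) [Field K] (n : ℤ) : Submodule K (LPA G K) :=
  Submodule.span K {x | ∃ μ ν : G.FinPath, μ.rng = ν.rng ∧
    (μ.length : ℤ) - (ν.length : ℤ) = n ∧ x = pathElem G K μ * pathStarElem G K ν}

/-- `W` is a `ℤ`-grading making `M` a graded module over the canonically graded
Leavitt path algebra. -/
def IsModuleGrading (G : DirGraph) (K : Type) [Field K] (M : Type) [AddCommGroup M]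
    [Module K M] [Module (LPA G K) M] (W : ℤ → Submodule K M) : Prop :=
  DirectSum.IsInternal W ∧
    ∀ (m k : ℤ) (a : LPA G K) (y : M), a ∈ LPAdeg G K m → y ∈ W k → a • y ∈ W (m + k)

/-- A set is graded (with respect to a grading `W`) if each of its elements is a finite sum
of homogeneous elements of the set. -/
def GradedCarrier {K M : Type} [Field K] [AddCommGroup M] [Module K M]
    (W : ℤ → Submodule K M) (S : Set M) : Prop :=
  ∀ m ∈ S, ∃ l : List M, (∀ z ∈ l, z ∈ S ∧ ∃ k, z ∈ W k) ∧ l.sum = m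

/-- A graded isomorphism between graded modules over the Leavitt path algebra. -/
def GradedIsoLPA (G : DirGraph) (K : Type) [Field K] (M N : Type)
    [AddCommGroup M] [AddCommGroup N] [Module K M] [Module K N]
    [Module (LPA G K) M] [Module (LPA G K) N]
    (W : ℤ → Submodule K M) (W' : ℤ → Submodule K N) : Prop :=
  ∃ f : M ≃ₗ[LPA G K] N, (∀ k, ∀ m ∈ W k, f m ∈ W' k) ∧ ∀ k, ∀ n ∈ W' k, f.symm n ∈ W k

/-- A module over the Leavitt path algebra is unital if it is generated by the images of the
vertices. -/
def IsUnitalModule (G : DirGraph) (K : Type) [Field K] (M : Type) [AddCommGroup M]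
    [Module (LPA G K) M] : Prop :=
  ∀ m : M, m ∈ Submodule.span (LPA G K) {y : M | ∃ (v : G.V) (m' : M), y = ofV G K v • m'}

/-! ## Chen modules, specified by a basis and the action of the generators -/

/-- A specification of the (twisted) Chen module attached to a boundary path `x`:
an `L_K(E)`-module `M` which is a `K'`-vector space with basis the tail-equivalence class
of `x`, the generators acting by the τ-twisted shift formulas. Here `K ⊆ K'` is a field
extension and `τ : E¹ → K'` is a family of nonzero scalars. -/
structure ChenSpecT (G : DirGraph) (K K' : Type) [Field K] [Field K'] [Algebra K K']
    (τ : G.E → K') (x : G.BPath) (M : Type) [AddCommGroup M] [Module K' M]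
    [Module (LPA G K) M] : Type where
  tau_ne : ∀ e, τ e ≠ 0
  basis : Module.Basis (orbit x) K' M
  act_v : ∀ (v : G.V) (p : orbit x),
    ofV G K v • basis p = if v = BPath.src (p : G.BPath) then basis p else 0
  act_e : ∀ (e : G.E) (p q : orbit x), IsCat (singleE G e) (p : G.BPath) (q : G.BPath) →
    ofE G K e • basis p = τ e • basis q
  act_e_zero : ∀ (e : G.E) (p : orbit x),
    (¬ ∃ q : G.BPath, IsCat (singleE G e) (p : G.BPath) q) → ofE G K e • basis p = 0
  act_g : ∀ (e : G.E) (p q : orbit x), IsCat (singleE G e) (p : G.BPath) (q : G.BPath) →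
    ofG G K e • basis q = (τ e)⁻¹ • basis p
  act_g_zero : ∀ (e : G.E) (q : orbit x),
    (¬ ∃ p : G.BPath, IsCat (singleE G e) p (q : G.BPath)) → ofG G K e • basis q = 0

/-- Specification of the Chen module `V_{[x]}^a` twisted by `a : E¹ → K^*`
(`a = 1` gives `V_{[x]}`). -/
abbrev ChenSpec (G : DirGraph) (K : Type) [Field K] (a : G.E → K) (x : G.BPath) (M : Type)
    [AddCommGroup M] [Module K M] [Module (LPA G K) M] : Type :=
  ChenSpecT G K K a x M

/-- The canonical grading on a Chen module: the degree-`k` component is spanned by the basis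
elements tail-equivalent to `x` with lag `k`. -/
def chenW {G : DirGraph} {K' : Type} [Field K'] {x : G.BPath} {M : Type}
    [AddCommGroup M] [Module K' M] (b : Module.Basis (orbit x) K' M) (k : ℤ) : Submodule K' M :=
  Submodule.span K' (⇑b '' {p : orbit x | TailEqLag (p : G.BPath) x k})

/-! ## The module `K L_x` -/

/-- The set `L_x` of pairs `(y, k)` with `y ∼_k x`. -/
def Lset (G : DirGraph) (x : G.BPath) : Set (G.BPath × ℤ) := {yk | TailEqLag yk.1 x yk.2}

/-- The underlying `K`-vector space of the module `K L_x`, with basis `L_x`. -/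
abbrev KLCarrier (G : DirGraph) (K : Type) [Field K] (x : G.BPath) : Type := (Lset G x) →₀ K

/-- Specification of the `L_K(E)`-module structure on `K L_x`, given by
`(μ ν^*) ⬝ (y, k) = (μ p, |μ| - |ν| + k)` when `y = ν p`, and `0` otherwise. The module
structure is encoded as a `K`-algebra homomorphism `ρ` to the endomorphism algebra. -/
def KLSpec (G : DirGraph) (K : Type) [Field K] (x : G.BPath)
    (ρ : LPA G K →ₐ[K] Module.End K (KLCarrier G K x)) : Prop :=
  (∀ (μ ν : G.FinPath), μ.rng = ν.rng → ∀ (yk zk : Lset G x) (p : G.BPath),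
      IsCat ν p (yk : G.BPath × ℤ).1 → IsCat μ p (zk : G.BPath × ℤ).1 →
      (zk : G.BPath × ℤ).2 = (yk : G.BPath × ℤ).2 + (μ.length : ℤ) - (ν.length : ℤ) →
      ρ (pathElem G K μ * pathStarElem G K ν) (Finsupp.single yk 1) = Finsupp.single zk 1) ∧
  (∀ (μ ν : G.FinPath), μ.rng = ν.rng → ∀ yk : Lset G x,
      (¬ ∃ p : G.BPath, IsCat ν p (yk : G.BPath × ℤ).1) →
      ρ (pathElem G K μ * pathStarElem G K ν) (Finsupp.single yk 1) = 0)

/-- The canonical grading of `K L_x`: `(y, k)` is homogeneous of degree `k`. -/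
noncomputable def KLgr (G : DirGraph) (K : Type) [Field K] (x : G.BPath) (k : ℤ) :
    Submodule K (KLCarrier G K x) :=
  Submodule.span K {m | ∃ yk : Lset G x, (yk : G.BPath × ℤ).2 = k ∧ m = Finsupp.single yk 1}

end DirGraph
namespace DirGraph

variable {G : DirGraph}

theorem FinPath.ext' {μ ν : G.FinPath} (h1 : μ.src = ν.src) (h2 : μ.edges = ν.edges) :
    μ = ν := by
  cases μ; cases ν; cases h1; cases h2; rfl

theorem InfPath.ext' {p q : G.InfPath} (h : p.edges = q.edges) : p = q := by
  cases p; cases q; cases h; rfl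

theorem FinPath.rng_congr {μ ν : G.FinPath} (h1 : μ.src = ν.src) (h2 : μ.edges = ν.edges) :
    μ.rng = ν.rng := by rw [FinPath.ext' h1 h2]

theorem head?_take_sub {α : Type _} {l : List α} {n : ℕ} {a : α}
    (h : a ∈ (l.take n).head?) : a ∈ l.head? := by
  cases l <;> cases n <;> simp_all

/-- Take the first `n` edges of a finite path. -/
def FinPath.takeP (ξ : G.FinPath) (n : ℕ) : G.FinPath where
  src := ξ.src
  edges := ξ.edges.take n
  src_eq := fun e he => ξ.src_eq e (head?_take_sub he)
  chain := ξ.chain.take n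

theorem FinPath.takeP_of_le {ξ : G.FinPath} {n : ℕ} (h : ξ.edges.length ≤ n) :
    ξ.takeP n = ξ :=
  FinPath.ext' rfl (List.take_of_length_le h)

theorem chain'_getElem {l : List G.E} (hc : l.Chain' (fun e f => G.r e = G.s f))
    {i : ℕ} (h : i + 1 < l.length) :
    G.r l[i] = G.s l[i + 1] := by
  change List.IsChain _ l at hc
  rw [List.isChain_iff_getElem] at hc
  exact hc i (by omega)

theorem junction {ξ : G.FinPath} {n : ℕ} {e : G.E}
    (h : e ∈ (ξ.edges.drop n).head?) : G.s e = (ξ.takeP n).rng := by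
  have hlt : n < ξ.edges.length := by
    by_contra hn
    rw [List.drop_of_length_le (by omega)] at h
    simp at h
  have he : e = ξ.edges[n] := by
    rw [List.head?_eq_getElem?, List.getElem?_drop] at h
    rw [List.getElem?_eq_getElem (by omega)] at h
    simpa using h.symm
  subst he
  cases n with
  | zero =>
    have : ξ.edges[0] ∈ ξ.edges.head? := by
      rw [List.head?_eq_getElem?]
      simp [List.getElem?_eq_getElem hlt]
    rw [ξ.src_eq _ this]
    simp [FinPath.takeP, FinPath.rng]
  | succ m =>
    have hg : (ξ.takeP (m+1)).rng = G.r ξ.edges[m] := by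
      have hlen : (ξ.edges.take (m+1)).length = m + 1 := by
        rw [List.length_take]; omega
      have hlast : (ξ.edges.take (m+1)).getLast? = some ξ.edges[m] := by
        rw [List.getLast?_eq_getElem?]
        simp only [hlen, Nat.add_sub_cancel]
        rw [List.getElem?_take_of_lt (by omega)]
        exact List.getElem?_eq_getElem (by omega)
      simp [FinPath.takeP, FinPath.rng, hlast]
    rw [hg]
    exact (chain'_getElem ξ.chain hlt).symm

/-- Drop the first `n` edges of a finite path. -/
def FinPath.dropP (ξ : G.FinPath) (n : ℕ) : G.FinPath where
  src := (ξ.takeP n).rng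
  edges := ξ.edges.drop n
  src_eq := fun _ he => junction he
  chain := ξ.chain.drop n

theorem FinPath.dropP_rng (ξ : G.FinPath) (n : ℕ) : (ξ.dropP n).rng = ξ.rng := by
  by_cases h : ξ.edges.length ≤ n
  · have hd : ξ.edges.drop n = [] := List.drop_of_length_le h
    have : (ξ.dropP n).rng = (ξ.takeP n).rng := by
      simp [FinPath.dropP, FinPath.rng, hd]
    rw [this, FinPath.takeP_of_le h]
  · have hd : ξ.edges.drop n ≠ [] := by
      intro hc
      have := List.length_drop (i := n) (l := ξ.edges) ▸ congrArg List.length hc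
      simp at this; omega
    have : ξ.edges = ξ.edges.take n ++ ξ.edges.drop n := (List.take_append_drop _ _).symm
    show ((ξ.edges.drop n).getLast?.map G.r).getD _ = (ξ.edges.getLast?.map G.r).getD _
    rw [show ξ.edges.getLast? = (ξ.edges.take n ++ ξ.edges.drop n).getLast? by rw [← this],
      List.getLast?_append_of_ne_nil _ hd]
    cases hl : (ξ.edges.drop n).getLast? with
    | none => exact absurd (List.getLast?_eq_none_iff.mp hl) hd
    | some a => simp

/-- Take the first `n` edges of an infinite path. -/
def InfPath.takeP (ξ : G.InfPath) (n : ℕ) : G.FinPath where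
  src := ξ.src
  edges := List.ofFn fun i : Fin n => ξ.edges i
  src_eq := by
    intro e he
    cases n with
    | zero => simp at he
    | succ m =>
      rw [List.ofFn_succ] at he
      simp only [List.head?_cons, Option.mem_def, Option.some.injEq] at he
      subst he; rfl
  chain := by
    show List.IsChain _ _
    rw [List.isChain_iff_getElem]
    intro i h
    simp only [List.length_ofFn] at h
    rw [List.getElem_ofFn, List.getElem_ofFn]
    exact ξ.chain i

/-- Drop the first `n` edges of an infinite path. -/
def InfPath.dropP (ξ : G.InfPath) (n : ℕ) : G.InfPath where
  edges := fun i => ξ.edges (n + i)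
  chain := fun i => by
    have := ξ.chain (n + i)
    rwa [show n + i + 1 = n + (i + 1) by omega] at this

theorem InfPath.takeP_length (ξ : G.InfPath) (n : ℕ) : (ξ.takeP n).edges.length = n := by
  simp [InfPath.takeP]

theorem InfPath.takeP_rng (ξ : G.InfPath) (n : ℕ) : (ξ.takeP n).rng = G.s (ξ.edges n) := by
  cases n with
  | zero => simp [InfPath.takeP, FinPath.rng, InfPath.src]
  | succ m =>
    have hlast : ((List.ofFn fun i : Fin (m+1) => ξ.edges i).getLast?) = some (ξ.edges m) := by
      rw [List.getLast?_eq_getElem?]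
      simp only [List.length_ofFn, Nat.add_sub_cancel]
      rw [List.getElem?_eq_getElem (by simp), List.getElem_ofFn]
    have : (ξ.takeP (m+1)).rng = G.r (ξ.edges m) := by
      simp only [InfPath.takeP, FinPath.rng, hlast]
      rfl
    rw [this, ξ.chain m]

end DirGraph
namespace DirGraph

variable {G : DirGraph}

theorem BPath.ext' {x y : G.BPath} (h : x.1 = y.1) : x = y := Subtype.ext h

/-- `n` is at most the length of the boundary path `y`. -/
def bLe (n : ℕ) (y : G.BPath) : Prop := ∀ ξ, y.1 = Sum.inl ξ → n ≤ ξ.edges.length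

theorem bLe_zero (y : G.BPath) : bLe 0 y := fun _ _ => Nat.zero_le _

theorem bLe_mono {m n : ℕ} {y : G.BPath} (h : m ≤ n) (hy : bLe n y) : bLe m y :=
  fun ξ hξ => le_trans h (hy ξ hξ)

/-- The first `n` edges of a boundary path, as a finite path. -/
def btake (y : G.BPath) (n : ℕ) : G.FinPath :=
  match y.1 with
  | Sum.inl ξ => ξ.takeP n
  | Sum.inr ξ => ξ.takeP n

/-- The boundary path obtained by removing the first `n` edges. -/
def bdrop (y : G.BPath) (n : ℕ) : G.BPath :=
  match y with
  | ⟨Sum.inl ξ, h⟩ => ⟨Sum.inl (ξ.dropP n), by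
      intro μ hμ
      injection hμ with h2
      subst h2
      rw [FinPath.dropP_rng]
      exact h ξ rfl⟩
  | ⟨Sum.inr ξ, _⟩ => ⟨Sum.inr (ξ.dropP n), by intro μ hμ; exact absurd hμ (by simp)⟩

theorem btake_inl (ξ : G.FinPath) (h) (n : ℕ) :
    btake (⟨Sum.inl ξ, h⟩ : G.BPath) n = ξ.takeP n := rfl

theorem btake_inr (ξ : G.InfPath) (h) (n : ℕ) :
    btake (⟨Sum.inr ξ, h⟩ : G.BPath) n = ξ.takeP n := rfl

theorem bdrop_inl (ξ : G.FinPath) (h) (n : ℕ) :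
    (bdrop (⟨Sum.inl ξ, h⟩ : G.BPath) n).1 = Sum.inl (ξ.dropP n) := rfl

theorem bdrop_inr (ξ : G.InfPath) (h) (n : ℕ) :
    (bdrop (⟨Sum.inr ξ, h⟩ : G.BPath) n).1 = Sum.inr (ξ.dropP n) := rfl

theorem src_inl (ξ : G.FinPath) (h) : BPath.src (⟨Sum.inl ξ, h⟩ : G.BPath) = ξ.src := rfl

theorem src_inr (ξ : G.InfPath) (h) : BPath.src (⟨Sum.inr ξ, h⟩ : G.BPath) = ξ.src := rfl

theorem isCat_iff_inl {μ : G.FinPath} {q ξ : G.FinPath} {hq hξ} :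
    IsCat μ (⟨Sum.inl q, hq⟩ : G.BPath) (⟨Sum.inl ξ, hξ⟩ : G.BPath) ↔
      μ.rng = q.src ∧ ξ.src = μ.src ∧ ξ.edges = μ.edges ++ q.edges := Iff.rfl

theorem isCat_iff_inr {μ : G.FinPath} {q ξ : G.InfPath} {hq hξ} :
    IsCat μ (⟨Sum.inr q, hq⟩ : G.BPath) (⟨Sum.inr ξ, hξ⟩ : G.BPath) ↔
      μ.rng = q.src ∧
      ((∀ (i : ℕ) (h : i < μ.edges.length), ξ.edges i = μ.edges.get ⟨i, h⟩) ∧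
       (∀ i : ℕ, ξ.edges (μ.edges.length + i) = q.edges i)) := Iff.rfl

theorem isCat_not_lr {μ : G.FinPath} {q : G.FinPath} {ξ : G.InfPath} {hq hξ} :
    ¬ IsCat μ (⟨Sum.inl q, hq⟩ : G.BPath) (⟨Sum.inr ξ, hξ⟩ : G.BPath) := fun h => h.2

theorem isCat_not_rl {μ : G.FinPath} {q : G.InfPath} {ξ : G.FinPath} {hq hξ} :
    ¬ IsCat μ (⟨Sum.inr q, hq⟩ : G.BPath) (⟨Sum.inl ξ, hξ⟩ : G.BPath) := fun h => h.2

theorem bdrop_zero (y : G.BPath) : bdrop y 0 = y := by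
  obtain ⟨yy, hy⟩ := y
  cases yy with
  | inl ξ => rfl
  | inr ξ =>
    apply BPath.ext'
    rw [bdrop_inr]
    congr 1
    apply InfPath.ext'
    funext i
    simp [InfPath.dropP]

theorem btake_src (y : G.BPath) (n : ℕ) : (btake y n).src = y.src := by
  obtain ⟨yy, hy⟩ := y
  cases yy with
  | inl ξ => rfl
  | inr ξ => rfl

theorem btake_length {n : ℕ} {y : G.BPath} (h : bLe n y) : (btake y n).edges.length = n := by
  obtain ⟨yy, hy⟩ := y
  cases yy with
  | inl ξ =>
    have := h ξ rfl
    simp [btake_inl, FinPath.takeP]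
    omega
  | inr ξ => simp [btake_inr, InfPath.takeP]

theorem isCat_btake_bdrop {n : ℕ} {y : G.BPath} (h : bLe n y) :
    IsCat (btake y n) (bdrop y n) y := by
  obtain ⟨yy, hy⟩ := y
  cases yy with
  | inl ξ =>
    rw [show bdrop (⟨Sum.inl ξ, hy⟩ : G.BPath) n =
      ⟨Sum.inl (ξ.dropP n), (bdrop (⟨Sum.inl ξ, hy⟩ : G.BPath) n).2⟩ from rfl]
    rw [btake_inl]; apply isCat_iff_inl.mpr
    exact ⟨rfl, rfl, (List.take_append_drop _ _).symm⟩
  | inr ξ =>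
    rw [show bdrop (⟨Sum.inr ξ, hy⟩ : G.BPath) n =
      ⟨Sum.inr (ξ.dropP n), (bdrop (⟨Sum.inr ξ, hy⟩ : G.BPath) n).2⟩ from rfl]
    rw [btake_inr]; apply isCat_iff_inr.mpr
    refine ⟨?_, ?_, ?_⟩
    · rw [InfPath.takeP_rng]
      show G.s (ξ.edges n) = G.s (ξ.edges (n + 0))
      rw [Nat.add_zero]
    · intro i hi
      simp only [InfPath.takeP] at hi ⊢
      rw [List.get_ofFn]
      rfl
    · intro i
      simp only [InfPath.takeP, List.length_ofFn]
      rfl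

theorem isCat_eq {μ : G.FinPath} {p y : G.BPath} (h : IsCat μ p y) :
    bLe μ.edges.length y ∧ μ = btake y μ.edges.length ∧ p = bdrop y μ.edges.length := by
  obtain ⟨py, hy⟩ := y
  obtain ⟨pp, hp⟩ := p
  cases py with
  | inl ξ =>
    cases pp with
    | inl q =>
      obtain ⟨h1, h2, h3⟩ := isCat_iff_inl.mp h
      have hble : bLe μ.edges.length (⟨Sum.inl ξ, hy⟩ : G.BPath) := by
        intro ξ' hξ'
        injection hξ' with h4
        subst h4
        rw [h3, List.length_append]
        omega
      have htake : μ = btake (⟨Sum.inl ξ, hy⟩ : G.BPath) μ.edges.length := by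
        rw [btake_inl]
        refine FinPath.ext' (show μ.src = (ξ.takeP μ.edges.length).src from h2.symm) ?_
        rw [show (ξ.takeP μ.edges.length).edges = ξ.edges.take μ.edges.length from rfl, h3,
          List.take_left]
      refine ⟨hble, htake, ?_⟩
      apply BPath.ext'
      show Sum.inl q = Sum.inl (ξ.dropP μ.edges.length)
      refine congrArg Sum.inl (FinPath.ext' ?_ ?_)
      · show q.src = (ξ.takeP μ.edges.length).rng
        have hμ : ξ.takeP μ.edges.length = μ := by
          rw [← btake_inl (h := hy)]; exact htake.symm
        rw [hμ]; exact h1.symm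
      · show q.edges = ξ.edges.drop μ.edges.length
        rw [h3, List.drop_left]
    | inr q => exact absurd h isCat_not_rl
  | inr ξ =>
    cases pp with
    | inl q => exact absurd h isCat_not_lr
    | inr q =>
      obtain ⟨h1, h2, h3⟩ := isCat_iff_inr.mp h
      refine ⟨fun ξ' hξ' => absurd hξ' (by simp), ?_, ?_⟩
      · rw [btake_inr]
        apply FinPath.ext'
        · show μ.src = G.s (ξ.edges 0)
          cases hn : μ.edges with
          | nil =>
            have hrng : μ.rng = μ.src := by simp [FinPath.rng, hn]
            have h30 : ξ.edges (μ.edges.length + 0) = q.edges 0 := h3 0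
            rw [hn] at h30
            simp only [List.length_nil, Nat.zero_add] at h30
            have hq0 : μ.rng = G.s (q.edges 0) := h1
            rw [hrng] at hq0
            rw [hq0, ← h30]
          | cons a t =>
            have hh : G.s a = μ.src := μ.src_eq a (by rw [hn]; rfl)
            have h20 : ξ.edges 0 = a := by
              rw [h2 0 (by rw [hn]; simp), List.get_eq_getElem]
              simp [hn]
            rw [← hh, h20]
        · show μ.edges = List.ofFn fun i : Fin μ.edges.length => ξ.edges i
          apply List.ext_getElem
          · simp
          · intro i h5 h6
            rw [List.getElem_ofFn]
            exact ((h2 i h5).trans List.get_eq_getElem).symm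
      · apply BPath.ext'
        show Sum.inr q = Sum.inr (ξ.dropP μ.edges.length)
        refine congrArg Sum.inr (InfPath.ext' ?_)
        funext i
        exact (h3 i).symm

theorem isCat_rng {μ : G.FinPath} {p y : G.BPath} (h : IsCat μ p y) : μ.rng = p.src := h.1

theorem isCat_src {μ : G.FinPath} {p y : G.BPath} (h : IsCat μ p y) : μ.src = y.src := by
  obtain ⟨-, h2, -⟩ := isCat_eq h
  rw [h2, btake_src]

end DirGraph
namespace DirGraph

variable {G : DirGraph}

theorem FinPath.rng_append {δ μ γ : G.FinPath} (hs : δ.src = μ.src)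
    (he : δ.edges = μ.edges ++ γ.edges) (hl : μ.rng = γ.src) : δ.rng = γ.rng := by
  by_cases hγ : γ.edges = []
  · have hδμ : δ = μ := FinPath.ext' hs (by rw [he, hγ, List.append_nil])
    rw [hδμ, hl]
    simp [FinPath.rng, hγ]
  · rw [FinPath.rng, FinPath.rng, he, List.getLast?_append_of_ne_nil _ hγ]
    cases hgl : γ.edges.getLast? with
    | none => exact absurd (List.getLast?_eq_none_iff.mp hgl) hγ
    | some b => simp

/-- Concatenation of finite paths. -/
def FinPath.append (μ γ : G.FinPath) (h : μ.rng = γ.src) : G.FinPath where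
  src := μ.src
  edges := μ.edges ++ γ.edges
  src_eq := by
    intro e he
    cases hμ : μ.edges with
    | nil =>
      rw [hμ, List.nil_append] at he
      rw [γ.src_eq e he, ← h]
      simp [FinPath.rng, hμ]
    | cons a t =>
      rw [hμ] at he
      simp only [List.cons_append, List.head?_cons, Option.mem_def, Option.some.injEq] at he
      subst he
      exact μ.src_eq _ (by rw [hμ]; rfl)
  chain := by
    show List.IsChain _ _
    rw [List.isChain_append]
    refine ⟨μ.chain, γ.chain, ?_⟩
    intro a ha b hb
    have h1 : μ.rng = G.r a := by
      rw [FinPath.rng, Option.mem_def.mp ha]; rfl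
    have h2 : G.s b = γ.src := γ.src_eq b hb
    rw [← h1, h, ← h2]

theorem FinPath.append_rng (μ γ : G.FinPath) (h : μ.rng = γ.src) :
    (μ.append γ h).rng = γ.rng := FinPath.rng_append (μ := μ) (γ := γ) rfl rfl h

theorem isCat_comp {μ γ δ : G.FinPath} {p q z : G.BPath}
    (h1 : IsCat μ p z) (h2 : IsCat γ q p)
    (hs : δ.src = μ.src) (he : δ.edges = μ.edges ++ γ.edges) : IsCat δ q z := by
  have hlink : μ.rng = γ.src := (isCat_rng h1).trans (isCat_src h2).symm
  obtain ⟨dsrc, dedges, dse, dch⟩ := δ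
  simp only at hs he
  subst hs
  subst he
  obtain ⟨pz, hz⟩ := z
  obtain ⟨pp, hp⟩ := p
  obtain ⟨pq, hq⟩ := q
  cases pz with
  | inl ζ =>
    cases pp with
    | inl π =>
      cases pq with
      | inl qq =>
        obtain ⟨a1, a2, a3⟩ := isCat_iff_inl.mp h1
        obtain ⟨b1, b2, b3⟩ := isCat_iff_inl.mp h2
        refine isCat_iff_inl.mpr ⟨?_, ?_, ?_⟩
        · exact (FinPath.rng_append (μ := μ) (γ := γ)
            (δ := ⟨μ.src, μ.edges ++ γ.edges, dse, dch⟩) rfl rfl hlink).trans b1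
        · rw [a2]
        · rw [a3, b3, List.append_assoc]
      | inr qq => exact absurd h2 isCat_not_rl
    | inr π => exact absurd h1 isCat_not_rl
  | inr ζ =>
    cases pp with
    | inl π => exact absurd h1 isCat_not_lr
    | inr π =>
      cases pq with
      | inl qq => exact absurd h2 isCat_not_lr
      | inr qq =>
        obtain ⟨a1, a2, a3⟩ := isCat_iff_inr.mp h1
        obtain ⟨b1, b2, b3⟩ := isCat_iff_inr.mp h2
        refine isCat_iff_inr.mpr ⟨?_, ?_, ?_⟩
        · exact (FinPath.rng_append (μ := μ) (γ := γ)
            (δ := ⟨μ.src, μ.edges ++ γ.edges, dse, dch⟩) rfl rfl hlink).trans b1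
        · intro i hi
          have hi' : i < μ.edges.length + γ.edges.length := by
            simpa using hi
          show ζ.edges i = (μ.edges ++ γ.edges).get ⟨i, hi⟩
          by_cases hlt : i < μ.edges.length
          · refine (a2 i hlt).trans ?_
            rw [List.get_eq_getElem, List.get_eq_getElem]
            exact (List.getElem_append_left hlt).symm
          · have hj : i = μ.edges.length + (i - μ.edges.length) := by omega
            have hjlt : i - μ.edges.length < γ.edges.length := by omega
            calc ζ.edges i = ζ.edges (μ.edges.length + (i - μ.edges.length)) := by rw [← hj]
              _ = π.edges (i - μ.edges.length) := a3 _
              _ = γ.edges.get ⟨i - μ.edges.length, hjlt⟩ := b2 _ hjlt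
              _ = γ.edges[i - μ.edges.length] := List.get_eq_getElem
              _ = (μ.edges ++ γ.edges).get ⟨i, by simp only [List.length_append]; omega⟩ := by
                  rw [List.get_eq_getElem]
                  exact (List.getElem_append_right (by omega)).symm
        · intro i
          show ζ.edges ((μ.edges ++ γ.edges).length + i) = qq.edges i
          rw [List.length_append,
            show μ.edges.length + γ.edges.length + i
              = μ.edges.length + (γ.edges.length + i) by omega,
            a3 (γ.edges.length + i), b3 i]

theorem bLe_bdrop {n m : ℕ} {y : G.BPath} (h : bLe (n + m) y) : bLe m (bdrop y n) := by
  obtain ⟨yy, hy⟩ := y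
  cases yy with
  | inl ξ =>
    intro ξ' hξ'
    rw [bdrop_inl] at hξ'
    injection hξ' with h2
    subst h2
    have := h ξ rfl
    show m ≤ (ξ.edges.drop n).length
    rw [List.length_drop]
    omega
  | inr ξ =>
    intro ξ' hξ'
    rw [bdrop_inr] at hξ'
    exact absurd hξ' (by simp)

theorem bLe_add {n m : ℕ} {y : G.BPath} (h1 : bLe n y) (h2 : bLe m (bdrop y n)) :
    bLe (n + m) y := by
  obtain ⟨yy, hy⟩ := y
  cases yy with
  | inl ξ =>
    intro ξ2 hξ2
    injection hξ2 with h3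
    subst h3
    have ha := h1 ξ rfl
    have hb := h2 (ξ.dropP n) (bdrop_inl _ _ _)
    have hlen : (ξ.dropP n).edges.length = ξ.edges.length - n := by
      show (ξ.edges.drop n).length = _
      rw [List.length_drop]
    show n + m ≤ ξ.edges.length
    omega
  | inr ξ => intro ξ2 hξ2; exact absurd hξ2 (by simp)

theorem bdrop_bdrop_btake {n m : ℕ} {y : G.BPath} (h : bLe (n + m) y) :
    bdrop (bdrop y n) m = bdrop y (n + m) ∧
    (btake y (n + m)).edges = (btake y n).edges ++ (btake (bdrop y n) m).edges := by
  have hn : bLe n y := bLe_mono (by omega) h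
  have hm : bLe m (bdrop y n) := bLe_bdrop h
  have c1 : IsCat (btake y n) (bdrop y n) y := isCat_btake_bdrop hn
  have c2 : IsCat (btake (bdrop y n) m) (bdrop (bdrop y n) m) (bdrop y n) :=
    isCat_btake_bdrop hm
  have hlink : (btake y n).rng = (btake (bdrop y n) m).src :=
    (isCat_rng c1).trans (btake_src _ _).symm
  have hcomp : IsCat ((btake y n).append (btake (bdrop y n) m) hlink)
      (bdrop (bdrop y n) m) y := isCat_comp c1 c2 rfl rfl
  obtain ⟨-, ht, hd⟩ := isCat_eq hcomp
  have hlen : ((btake y n).append (btake (bdrop y n) m) hlink).edges.length = n + m := by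
    show ((btake y n).edges ++ (btake (bdrop y n) m).edges).length = n + m
    rw [List.length_append, btake_length hn, btake_length hm]
  rw [hlen] at ht hd
  constructor
  · exact hd
  · rw [← ht]
    rfl

theorem bdrop_bdrop {n m : ℕ} {y : G.BPath} (h : bLe (n + m) y) :
    bdrop (bdrop y n) m = bdrop y (n + m) := (bdrop_bdrop_btake h).1

theorem btake_append {n m : ℕ} {y : G.BPath} (h : bLe (n + m) y) :
    (btake y (n + m)).edges = (btake y n).edges ++ (btake (bdrop y n) m).edges :=
  (bdrop_bdrop_btake h).2

end DirGraph
namespace DirGraph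

variable {G : DirGraph}

theorem getElem_idx_congr {α : Type _} {l : List α} {i j : ℕ} (h : i = j) (hi : i < l.length) :
    l[i]'hi = l[j]'(h ▸ hi) := by cases h; rfl

theorem FinPath.rng_getLast {μ : G.FinPath} {i : ℕ} (h : i + 1 = μ.edges.length) :
    μ.rng = G.r (μ.edges[i]'(by omega)) := by
  rw [FinPath.rng, List.getLast?_eq_getElem?,
    List.getElem?_eq_getElem (show μ.edges.length - 1 < μ.edges.length by omega)]
  show G.r (μ.edges[μ.edges.length - 1]'(by omega)) = G.r (μ.edges[i]'(by omega))
  rw [getElem_idx_congr (show μ.edges.length - 1 = i by omega)]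

/-- The concatenation of a finite path and a boundary path. -/
noncomputable def bcat (μ : G.FinPath) (p : G.BPath) (h : μ.rng = p.src) : G.BPath :=
  match p with
  | ⟨Sum.inl q, hq⟩ => ⟨Sum.inl (μ.append q h), by
      intro ν hν
      injection hν with h2
      subst h2
      rw [show (μ.append q h).rng = q.rng from FinPath.append_rng μ q h]
      exact hq q rfl⟩
  | ⟨Sum.inr q, hq⟩ => ⟨Sum.inr
      { edges := fun i => if hi : i < μ.edges.length then μ.edges[i]
          else q.edges (i - μ.edges.length)
        chain := by
          intro i
          show G.r (if hi : i < μ.edges.length then μ.edges[i]'hi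
              else q.edges (i - μ.edges.length))
            = G.s (if hi : i + 1 < μ.edges.length then μ.edges[i+1]'hi
              else q.edges (i + 1 - μ.edges.length))
          by_cases h1 : i + 1 < μ.edges.length
          · rw [dif_pos (by omega : i < μ.edges.length), dif_pos h1]
            exact chain'_getElem μ.chain h1
          · by_cases h2 : i < μ.edges.length
            · have h3 : i + 1 = μ.edges.length := by omega
              rw [dif_pos h2, dif_neg h1]
              have h4 : μ.rng = G.r (μ.edges[i]'(by omega)) := FinPath.rng_getLast h3
              rw [← h4, h]
              show G.s (q.edges 0) = G.s (q.edges (i + 1 - μ.edges.length))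
              rw [show i + 1 - μ.edges.length = 0 from by omega]
            · rw [dif_neg h2, dif_neg (by omega)]
              have h5 : i + 1 - μ.edges.length = (i - μ.edges.length) + 1 := by omega
              rw [h5]
              exact q.chain _ }, by
      intro ν hν
      exact absurd hν (by simp)⟩

theorem isCat_bcat (μ : G.FinPath) (p : G.BPath) (h : μ.rng = p.src) :
    IsCat μ p (bcat μ p h) := by
  obtain ⟨pp, hp⟩ := p
  cases pp with
  | inl q =>
    rw [show bcat μ (⟨Sum.inl q, hp⟩ : G.BPath) h
        = ⟨Sum.inl (μ.append q h), (bcat μ _ h).2⟩ from rfl]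
    exact isCat_iff_inl.mpr ⟨h, rfl, rfl⟩
  | inr q =>
    refine ⟨h, ?_, ?_⟩
    · intro i hi
      show (if hi' : i < μ.edges.length then μ.edges[i]'hi'
          else q.edges (i - μ.edges.length)) = μ.edges.get ⟨i, hi⟩
      rw [dif_pos hi, List.get_eq_getElem]
    · intro i
      show (if hi' : μ.edges.length + i < μ.edges.length
            then μ.edges[μ.edges.length + i]'hi' else
          q.edges (μ.edges.length + i - μ.edges.length)) = q.edges i
      rw [dif_neg (by omega)]
      congr 1
      omega

theorem tailEqLag_self (x : G.BPath) : TailEqLag x x 0 := by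
  refine ⟨btake x 0, btake x 0, bdrop x 0, isCat_btake_bdrop (bLe_zero x),
    isCat_btake_bdrop (bLe_zero x), by simp⟩

theorem tailEqLag_symm {x y : G.BPath} {k : ℤ} (h : TailEqLag x y k) : TailEqLag y x (-k) := by
  obtain ⟨μ, ν, p, h1, h2, h3⟩ := h
  exact ⟨ν, μ, p, h2, h1, by omega⟩

/-- `y = μ p` gives `y ∼_{|μ|} p`. -/
theorem tailEqLag_of_isCat {μ : G.FinPath} {p y : G.BPath} (h : IsCat μ p y) :
    TailEqLag y p (μ.length : ℤ) := by
  refine ⟨μ, btake p 0, p, h, ?_, ?_⟩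
  · have := isCat_btake_bdrop (bLe_zero p)
    rwa [bdrop_zero] at this
  · show (μ.edges.length : ℤ) - ((btake p 0).edges.length : ℤ) = (μ.edges.length : ℤ)
    rw [btake_length (bLe_zero p)]
    simp

theorem tailEqLag_trans {z y x : G.BPath} {m k : ℤ}
    (h1 : TailEqLag z y m) (h2 : TailEqLag y x k) : TailEqLag z x (m + k) := by
  obtain ⟨μ, ν, p, hz, hyp, hm⟩ := h1
  obtain ⟨α, β, q, hyq, hx, hk⟩ := h2
  obtain ⟨hbleν, hνeq, hpeq⟩ := isCat_eq hyp
  obtain ⟨hbleα, hαeq, hqeq⟩ := isCat_eq hyq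
  by_cases hc : ν.edges.length ≤ α.edges.length
  · set d := α.edges.length - ν.edges.length with hd
    have hble : bLe (ν.edges.length + d) y := by
      rw [show ν.edges.length + d = α.edges.length by omega]
      exact hbleα
    have hq2 : q = bdrop p d := by
      rw [hqeq, hpeq, bdrop_bdrop hble, show ν.edges.length + d = α.edges.length by omega]
    have hcat : IsCat (btake p d) q p := by
      rw [hq2]
      exact isCat_btake_bdrop (by rw [hpeq]; exact bLe_bdrop hble)
    have hlink : μ.rng = (btake p d).src := (isCat_rng hz).trans (btake_src p d).symm
    have hcomp : IsCat (μ.append (btake p d) hlink) q z := isCat_comp hz hcat rfl rfl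
    refine ⟨μ.append (btake p d) hlink, β, q, hcomp, hx, ?_⟩
    have hlen : (μ.append (btake p d) hlink).edges.length = μ.edges.length + d := by
      show (μ.edges ++ (btake p d).edges).length = _
      rw [List.length_append, btake_length (by rw [hpeq]; exact bLe_bdrop hble)]
    show ((μ.append (btake p d) hlink).edges.length : ℤ) - (β.edges.length : ℤ) = m + k
    rw [hlen]
    simp only [FinPath.length] at hm hk
    push_cast
    omega
  · set d := ν.edges.length - α.edges.length with hd
    have hble : bLe (α.edges.length + d) y := by
      rw [show α.edges.length + d = ν.edges.length by omega]
      exact hbleν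
    have hp2 : p = bdrop q d := by
      rw [hpeq, hqeq, bdrop_bdrop hble, show α.edges.length + d = ν.edges.length by omega]
    have hcat : IsCat (btake q d) p q := by
      rw [hp2]
      exact isCat_btake_bdrop (by rw [hqeq]; exact bLe_bdrop hble)
    have hlink : β.rng = (btake q d).src := (isCat_rng hx).trans (btake_src q d).symm
    have hcomp : IsCat (β.append (btake q d) hlink) p x := isCat_comp hx hcat rfl rfl
    refine ⟨μ, β.append (btake q d) hlink, p, hz, hcomp, ?_⟩
    have hlen : (β.append (btake q d) hlink).edges.length = β.edges.length + d := by
      show (β.edges ++ (btake q d).edges).length = _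
      rw [List.length_append, btake_length (by rw [hqeq]; exact bLe_bdrop hble)]
    show (μ.edges.length : ℤ) - ((β.append (btake q d) hlink).edges.length : ℤ) = m + k
    rw [hlen]
    simp only [FinPath.length] at hm hk
    push_cast
    omega

theorem tailEq_trans {z y x : G.BPath} (h1 : TailEq z y) (h2 : TailEq y x) : TailEq z x := by
  obtain ⟨m, hm⟩ := h1
  obtain ⟨k, hk⟩ := h2
  exact ⟨m + k, tailEqLag_trans hm hk⟩

theorem tailEq_symm {x y : G.BPath} (h : TailEq x y) : TailEq y x := by
  obtain ⟨k, hk⟩ := h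
  exact ⟨-k, tailEqLag_symm hk⟩

/-- If `x ∼_m x` with `m ≠ 0` then `x` is rational. -/
theorem isRational_of_lag_self_pos {x : G.BPath} {m : ℤ} (hpos : 0 < m)
    (h : TailEqLag x x m) : IsRational x := by
  have hm : m ≠ 0 := by omega
  obtain ⟨μ, ν, p, h1, h2, h3⟩ := h
  obtain ⟨hbleμ, hμeq, hpμ⟩ := isCat_eq h1
  obtain ⟨hbleν, hνeq, hpν⟩ := isCat_eq h2
  have hlt : ν.edges.length < μ.edges.length := by
    simp only [FinPath.length] at h3
    omega
  set d := μ.edges.length - ν.edges.length with hd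
  have hble : bLe (ν.edges.length + d) x := by
    rw [show ν.edges.length + d = μ.edges.length by omega]
    exact hbleμ
  have hpp : p = bdrop p d := by
    conv_lhs => rw [hpμ]
    rw [hpν, bdrop_bdrop hble, show ν.edges.length + d = μ.edges.length by omega]
  have hbled : bLe d p := by rw [hpν]; exact bLe_bdrop hble
  have hcat : IsCat (btake p d) p p := by
    have := isCat_btake_bdrop hbled
    rwa [← hpp] at this
  refine ⟨btake p d, p, ?_, hcat, ?_⟩
  · show 0 < (btake p d).edges.length
    rw [btake_length hbled]
    omega
  · refine ⟨(ν.edges.length : ℤ), ν, btake p 0, p, h2, ?_, ?_⟩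
    · have := isCat_btake_bdrop (bLe_zero p)
      rwa [bdrop_zero] at this
    · show (ν.edges.length : ℤ) - ((btake p 0).edges.length : ℤ) = (ν.edges.length : ℤ)
      rw [btake_length (bLe_zero p)]
      simp

/-- If `x ∼_m x` with `m ≠ 0` then `x` is rational. -/
theorem isRational_of_lag_self {x : G.BPath} {m : ℤ} (hm : m ≠ 0)
    (h : TailEqLag x x m) : IsRational x := by
  rcases lt_or_gt_of_ne hm with hneg | hpos
  · exact isRational_of_lag_self_pos (m := -m) (by omega) (by simpa using tailEqLag_symm h)
  · exact isRational_of_lag_self_pos hpos h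

/-- If `x` is not rational, lags are unique. -/
theorem lag_unique {x y : G.BPath} {k k' : ℤ} (hx : ¬ IsRational x)
    (h1 : TailEqLag y x k) (h2 : TailEqLag y x k') : k = k' := by
  by_contra hne
  have : TailEqLag x x (-k + k') := tailEqLag_trans (tailEqLag_symm h1) h2
  exact hx (isRational_of_lag_self (by omega) this)

end DirGraph
namespace DirGraph

set_option linter.unusedSectionVars false

variable {G : DirGraph} {K : Type} [Field K]

theorem ofV_mul_self (v : G.V) : ofV G K v * ofV G K v = ofV G K v := by
  rw [ofV, ← map_mul]
  exact RingQuot.mkAlgHom_rel K (LRel.vv_eq v)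

theorem ofE_mul_ofV (e : G.E) : ofE G K e * ofV G K (G.r e) = ofE G K e := by
  rw [ofE, ofV, ← map_mul]
  exact RingQuot.mkAlgHom_rel K (LRel.e1r e)

theorem pathElem_mul_ofV (μ : G.FinPath) :
    pathElem G K μ * ofV G K μ.rng = pathElem G K μ := by
  rcases List.eq_nil_or_concat μ.edges with h | ⟨l, e, h⟩
  · have hrng : μ.rng = μ.src := by simp [FinPath.rng, h]
    rw [pathElem, hrng, h]
    simp only [List.map_nil, List.prod_nil, mul_one]
    exact ofV_mul_self μ.src
  · rw [List.concat_eq_append] at h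
    have hrng : μ.rng = G.r e := by
      rw [FinPath.rng, h, List.getLast?_append_of_ne_nil _ (by simp)]
      rfl
    rw [pathElem, hrng, h]
    simp only [List.map_append, List.prod_append, List.map_cons, List.map_nil,
      List.prod_cons, List.prod_nil, mul_one]
    rw [mul_assoc, mul_assoc, ofE_mul_ofV]

/-- Product of ghost edges along a list, in reverse order. -/
def gp (K : Type) [Field K] {G : DirGraph} (l : List G.E) : LPA G K :=
  (l.reverse.map (ofG G K)).prod

theorem gp_nil : gp K ([] : List G.E) = 1 := rfl

theorem gp_cons (e : G.E) (l : List G.E) :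
    gp K (e :: l) = gp K l * ofG G K e := by
  simp [gp, List.reverse_cons, List.map_append, List.prod_append]

theorem pathStarElem_eq (μ : G.FinPath) :
    pathStarElem G K μ = gp K μ.edges * ofV G K μ.src := rfl

theorem singleE_edges (e : G.E) : (singleE G e).edges = [e] := rfl

theorem singleE_src (e : G.E) : (singleE G e).src = G.s e := rfl

theorem singleE_rng (e : G.E) : (singleE G e).rng = G.r e := by
  simp [singleE, FinPath.rng]

/-- Splitting off the first edge of a concatenation. -/
theorem isCat_cons {μ : G.FinPath} {p y : G.BPath} {e : G.E} {l : List G.E}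
    (h : IsCat μ p y) (he : μ.edges = e :: l) :
    ∃ μ' : G.FinPath, μ'.edges = l ∧ IsCat (singleE G e) (bdrop y 1) y ∧
      IsCat μ' p (bdrop y 1) := by
  obtain ⟨hble, hμeq, hpeq⟩ := isCat_eq h
  have hn : μ.edges.length = 1 + l.length := by rw [he]; simp; omega
  have hble' : bLe (1 + l.length) y := hn ▸ hble
  have h1 : bLe 1 y := bLe_mono (by omega) hble'
  have happ := btake_append (n := 1) (m := l.length) hble'
  have hμtake : μ.edges = (btake y (1 + l.length)).edges := by
    conv_lhs => rw [hμeq]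
    rw [hn]
  have hsplit : e :: l = (btake y 1).edges ++ (btake (bdrop y 1) l.length).edges := by
    rw [← happ, ← hμtake, he]
  have hlen1 : (btake y 1).edges.length = 1 := btake_length h1
  obtain ⟨a, ha⟩ : ∃ a, (btake y 1).edges = [a] := by
    cases h2 : (btake y 1).edges with
    | nil => rw [h2] at hlen1; simp at hlen1
    | cons a t =>
      rw [h2] at hlen1
      simp only [List.length_cons] at hlen1
      have : t = [] := List.length_eq_zero_iff.mp (by omega)
      exact ⟨a, by rw [this]⟩
  rw [ha] at hsplit
  have hae : a = e ∧ l = (btake (bdrop y 1) l.length).edges := by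
    have := hsplit
    simp only [List.cons_append, List.nil_append, List.cons.injEq] at this
    exact ⟨this.1.symm, this.2⟩
  have hse : G.s e = μ.src := μ.src_eq e (by rw [he]; rfl)
  have hsing : btake y 1 = singleE G e := by
    refine FinPath.ext' ?_ ?_
    · rw [btake_src, singleE_src, hse, isCat_src h]
    · rw [ha, singleE_edges, hae.1]
  have hc1 : IsCat (singleE G e) (bdrop y 1) y := by
    have := isCat_btake_bdrop h1
    rwa [hsing] at this
  refine ⟨btake (bdrop y 1) l.length, hae.2.symm, hc1, ?_⟩
  have hc2 := isCat_btake_bdrop (y := bdrop y 1) (n := l.length) (bLe_bdrop hble')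
  have hdd : bdrop (bdrop y 1) l.length = p := by
    rw [bdrop_bdrop hble', ← hn, ← hpeq]
  rwa [hdd] at hc2

theorem isCat_nil_self {μ : G.FinPath} {y : G.BPath} (he : μ.edges = [])
    (hs : μ.src = y.src) : IsCat μ y y := by
  have hb : btake y 0 = μ := by
    refine FinPath.ext' ?_ ?_
    · rw [btake_src, hs]
    · have := btake_length (bLe_zero y)
      rw [List.length_eq_zero_iff.mp this, he]
  have := isCat_btake_bdrop (bLe_zero y)
  rwa [hb, bdrop_zero] at this

section Chen

variable {x : G.BPath} {M : Type} [AddCommGroup M] [Module K M] [Module (LPA G K) M]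
  [IsScalarTower K (LPA G K) M]

theorem mem_orbit_of_isCat_left {μ : G.FinPath} {p y : G.BPath}
    (h : IsCat μ p y) (hy : y ∈ orbit x) : p ∈ orbit x :=
  tailEq_trans (tailEq_symm ⟨_, tailEqLag_of_isCat h⟩) hy

theorem mem_orbit_of_isCat_right {μ : G.FinPath} {p y : G.BPath}
    (h : IsCat μ p y) (hp : p ∈ orbit x) : y ∈ orbit x :=
  tailEq_trans ⟨_, tailEqLag_of_isCat h⟩ hp

variable (sp : ChenSpec G K (fun _ => 1) x M)

theorem act_prodE : ∀ (l : List G.E) (μ : G.FinPath), μ.edges = l →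
    ∀ (p y : G.BPath) (hp : p ∈ orbit x) (hy : y ∈ orbit x), IsCat μ p y →
    (l.map (ofE G K)).prod • sp.basis ⟨p, hp⟩ = sp.basis ⟨y, hy⟩ := by
  intro l
  induction l with
  | nil =>
    intro μ hμ p y hp hy hcat
    have hpy : p = y := by
      have h3 := (isCat_eq hcat).2.2
      rw [hμ] at h3
      simpa [bdrop_zero] using h3
    subst hpy
    simp
  | cons e l ih =>
    intro μ hμ p y hp hy hcat
    obtain ⟨μ', hμ'e, hcs, hcs'⟩ := isCat_cons hcat hμ
    have hy' : bdrop y 1 ∈ orbit x := mem_orbit_of_isCat_left hcs hy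
    have ihe := ih μ' hμ'e p (bdrop y 1) hp hy' hcs'
    rw [List.map_cons, List.prod_cons, mul_smul, ihe]
    have := sp.act_e e ⟨bdrop y 1, hy'⟩ ⟨y, hy⟩ hcs
    rw [this, one_smul]

theorem act_prodG : ∀ (l : List G.E) (μ : G.FinPath), μ.edges = l →
    ∀ (p y : G.BPath) (hp : p ∈ orbit x) (hy : y ∈ orbit x), IsCat μ p y →
    gp K l • sp.basis ⟨y, hy⟩ = sp.basis ⟨p, hp⟩ := by
  intro l
  induction l with
  | nil =>
    intro μ hμ p y hp hy hcat
    have hpy : p = y := by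
      have h3 := (isCat_eq hcat).2.2
      rw [hμ] at h3
      simpa [bdrop_zero] using h3
    subst hpy
    rw [gp_nil, one_smul]
  | cons e l ih =>
    intro μ hμ p y hp hy hcat
    obtain ⟨μ', hμ'e, hcs, hcs'⟩ := isCat_cons hcat hμ
    have hy' : bdrop y 1 ∈ orbit x := mem_orbit_of_isCat_left hcs hy
    have ihe := ih μ' hμ'e p (bdrop y 1) hp hy' hcs'
    rw [gp_cons, mul_smul]
    have hg := sp.act_g e ⟨bdrop y 1, hy'⟩ ⟨y, hy⟩ hcs
    rw [hg, inv_one, one_smul, ihe]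

theorem act_gzero : ∀ (l : List G.E) (μ : G.FinPath), μ.edges = l →
    ∀ (y : G.BPath) (hy : y ∈ orbit x), μ.src = y.src →
    (¬ ∃ p : G.BPath, IsCat μ p y) →
    gp K l • sp.basis ⟨y, hy⟩ = 0 := by
  intro l
  induction l with
  | nil =>
    intro μ hμ y hy hsrc hnex
    exact absurd ⟨y, isCat_nil_self hμ hsrc⟩ hnex
  | cons e l ih =>
    intro μ hμ y hy hsrc hnex
    rw [gp_cons, mul_smul]
    by_cases hex : ∃ y', IsCat (singleE G e) y' y
    · obtain ⟨y', hy'c⟩ := hex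
      have hy' : y' ∈ orbit x := mem_orbit_of_isCat_left hy'c hy
      have hg := sp.act_g e ⟨y', hy'⟩ ⟨y, hy⟩ hy'c
      rw [hg, inv_one, one_smul]
      have hch : (e :: l).Chain' (fun a b => G.r a = G.s b) := hμ ▸ μ.chain
      have hch' := List.isChain_cons.mp hch
      have hμt : ∃ μt : G.FinPath, μt.src = G.r e ∧ μt.edges = l :=
        ⟨⟨G.r e, l, fun f hf => (hch'.1 f hf).symm, hch'.2⟩, rfl, rfl⟩
      obtain ⟨μt, hμts, hμte⟩ := hμt
      refine ih μt hμte y' hy' ?_ ?_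
      · rw [hμts, ← singleE_rng e, isCat_rng hy'c]
      · rintro ⟨p, hp⟩
        refine hnex ⟨p, isCat_comp hy'c hp ?_ ?_⟩
        · rw [singleE_src, μ.src_eq e (by rw [hμ]; rfl)]
        · rw [hμ, singleE_edges, hμte, List.singleton_append]
    · have hz := sp.act_g_zero e ⟨y, hy⟩ (by exact_mod_cast hex)
      rw [hz, smul_zero]

theorem act_pathElem {μ : G.FinPath} {p y : G.BPath} (hp : p ∈ orbit x) (hy : y ∈ orbit x)
    (hcat : IsCat μ p y) :
    pathElem G K μ • sp.basis ⟨p, hp⟩ = sp.basis ⟨y, hy⟩ := by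
  rw [pathElem, mul_smul, act_prodE sp μ.edges μ rfl p y hp hy hcat]
  rw [sp.act_v μ.src ⟨y, hy⟩, if_pos (isCat_src hcat)]

theorem act_pathStar {ν : G.FinPath} {p y : G.BPath} (hp : p ∈ orbit x) (hy : y ∈ orbit x)
    (hcat : IsCat ν p y) :
    pathStarElem G K ν • sp.basis ⟨y, hy⟩ = sp.basis ⟨p, hp⟩ := by
  rw [pathStarElem_eq, mul_smul, sp.act_v ν.src ⟨y, hy⟩, if_pos (isCat_src hcat)]
  exact act_prodG sp ν.edges ν rfl p y hp hy hcat

theorem act_pathStar_zero {ν : G.FinPath} {y : G.BPath} (hy : y ∈ orbit x)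
    (hnex : ¬ ∃ p : G.BPath, IsCat ν p y) :
    pathStarElem G K ν • sp.basis ⟨y, hy⟩ = 0 := by
  rw [pathStarElem_eq, mul_smul, sp.act_v ν.src ⟨y, hy⟩]
  by_cases hsrc : ν.src = y.src
  · rw [if_pos hsrc]
    exact act_gzero sp ν.edges ν rfl y hy hsrc hnex
  · rw [if_neg hsrc, smul_zero]

end Chen

end DirGraph
namespace DirGraph

set_option linter.unusedSectionVars false
set_option maxHeartbeats 1000000
set_option synthInstance.maxHeartbeats 400000

variable {G : DirGraph} {K : Type} [Field K]

theorem lpa_smul_comm {M : Type} [AddCommGroup M] [Module K M] [Module (LPA G K) M]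
    [IsScalarTower K (LPA G K) M] (r : K) (a : LPA G K) (y : M) :
    a • (r • y) = r • (a • y) := by
  have h1 : r • y = (r • (1 : LPA G K)) • y := by rw [smul_assoc, one_smul]
  rw [h1, ← mul_smul, mul_smul_comm, mul_one, smul_assoc]

theorem pathElem_mem_LPAdeg (μ : G.FinPath) :
    pathElem G K μ ∈ LPAdeg G K (μ.length : ℤ) := by
  apply Submodule.subset_span
  refine ⟨μ, vertexPath G μ.rng, rfl, ?_, ?_⟩
  · simp [FinPath.length, vertexPath]
  · have hps : pathStarElem G K (vertexPath G μ.rng) = ofV G K μ.rng := by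
      simp [pathStarElem, vertexPath]
    rw [hps, pathElem_mul_ofV]

section Main

variable {x : G.BPath} {M : Type} [AddCommGroup M] [Module K M] [Module (LPA G K) M]
  [IsScalarTower K (LPA G K) M] (sp : ChenSpec G K (fun _ => 1) x M)

include sp in
theorem forward_dir (W : ℤ → Submodule K M) (hInt : DirectSum.IsInternal W)
    (hAct : ∀ (m k : ℤ) (a : LPA G K) (y : M), a ∈ LPAdeg G K m → y ∈ W k →
      a • y ∈ W (m + k)) (hrat : IsRational x) : False := by
  obtain ⟨c, p, hclen, hcp, hxp⟩ := hrat
  have hp : p ∈ orbit x := tailEq_symm hxp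
  set b : M := sp.basis ⟨p, hp⟩ with hb
  have hfix : pathElem G K c • b = b := act_pathElem sp hp hp hcp
  have hdeg := pathElem_mem_LPAdeg (K := K) c
  set n : ℤ := (c.length : ℤ) with hn'
  have hn : 0 < n := by rw [hn']; exact_mod_cast hclen
  obtain ⟨d, hd⟩ := hInt.surjective b
  classical
  set d' : DirectSum ℤ (fun k : ℤ => W k) := ∑ k ∈ d.support,
    DirectSum.of (fun k : ℤ => W k) (n + k)
      ⟨pathElem G K c • (d k : M), hAct n k _ _ hdeg (d k).2⟩ with hd'def
  have hcoe : ∀ (i : ℤ) (v : W i),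
      DirectSum.coeAddMonoidHom W (DirectSum.of (fun k : ℤ => W k) i v) = (v : M) :=
    fun i v => DirectSum.coeAddMonoidHom_of W i v
  have hsum : ∑ k ∈ d.support, (d k : M) = b := by
    conv_rhs => rw [← hd, ← DirectSum.sum_support_of (x := d)]
    rw [map_sum]
    exact Finset.sum_congr rfl fun k _ => (hcoe k (d k)).symm
  have hd' : DirectSum.coeAddMonoidHom W d' = b := by
    rw [hd'def, map_sum]
    have : ∀ k ∈ d.support, DirectSum.coeAddMonoidHom W
        (DirectSum.of (fun k : ℤ => W k) (n + k)
          ⟨pathElem G K c • (d k : M), hAct n k _ _ hdeg (d k).2⟩)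
        = pathElem G K c • (d k : M) := fun k _ => hcoe _ _
    rw [Finset.sum_congr rfl this, ← Finset.smul_sum, hsum, hfix]
  have hdd : d' = d := hInt.injective (by rw [hd', hd])
  have hbne : b ≠ 0 := Module.Basis.ne_zero _ _
  have hsupp : d.support.Nonempty := by
    by_contra hcon
    rw [Finset.not_nonempty_iff_eq_empty, DFinsupp.support_eq_empty] at hcon
    apply hbne
    rw [← hd, hcon, map_zero]
  set k0 := d.support.min' hsupp with hk0def
  have hk0 : d k0 ≠ 0 := DFinsupp.mem_support_iff.mp (d.support.min'_mem hsupp)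
  have hzero : d' k0 = 0 := by
    rw [hd'def, DFinsupp.finset_sum_apply]
    apply Finset.sum_eq_zero
    intro k hk
    apply DirectSum.of_eq_of_ne
    have := d.support.min'_le k hk
    omega
  exact hk0 (by rw [← hdd, hzero])

theorem backward_internal (hnr : ¬ IsRational x) :
    DirectSum.IsInternal (chenW sp.basis) := by
  apply DirectSum.isInternal_submodule_of_iSupIndep_of_iSup_eq_top
  · intro k
    rw [Submodule.disjoint_def]
    intro m hmk hmrest
    have hle : (⨆ (j) (_ : j ≠ k), chenW sp.basis j) ≤
        Submodule.span K (⇑sp.basis '' {p : orbit x | ¬ TailEqLag (p : G.BPath) x k}) := by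
      refine iSup_le fun j => iSup_le fun hj => Submodule.span_le.mpr ?_
      rintro _ ⟨p, hp, rfl⟩
      exact Submodule.subset_span ⟨p, fun hk' => hj (lag_unique hnr hp hk'), rfl⟩
    have h1 := sp.basis.mem_span_image.mp hmk
    have h2 := sp.basis.mem_span_image.mp (hle hmrest)
    have hrep : sp.basis.repr m = 0 := by
      ext p
      by_contra hne
      have hmem : p ∈ (sp.basis.repr m).support := Finsupp.mem_support_iff.mpr hne
      exact (h2 hmem) (h1 hmem)
    simpa using congrArg (⇑sp.basis.repr.symm) hrep
  · rw [eq_top_iff, ← sp.basis.span_eq]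
    refine Submodule.span_le.mpr ?_
    rintro _ ⟨p, rfl⟩
    obtain ⟨k, hk⟩ := p.2
    exact Submodule.mem_iSup_of_mem k (Submodule.subset_span ⟨p, hk, rfl⟩)

theorem backward_action (m k : ℤ) (a : LPA G K) (y : M) (ha : a ∈ LPAdeg G K m)
    (hy : y ∈ chenW sp.basis k) : a • y ∈ chenW sp.basis (m + k) := by
  induction ha using Submodule.span_induction generalizing y with
  | mem a hagen =>
    obtain ⟨μ, ν, hrng, hlag, rfl⟩ := hagen
    induction hy using Submodule.span_induction with
    | mem v hv =>
      obtain ⟨p, hpk, rfl⟩ := hv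
      rw [mul_smul]
      by_cases hex : ∃ p', IsCat ν p' (p : G.BPath)
      · obtain ⟨p', hp'⟩ := hex
        have hp'orb : p' ∈ orbit x := mem_orbit_of_isCat_left hp' p.2
        rw [show sp.basis p = sp.basis ⟨(p : G.BPath), p.2⟩ from rfl,
          act_pathStar sp hp'orb p.2 hp']
        have hcomp : μ.rng = p'.src := hrng.trans (isCat_rng hp')
        have hz := isCat_bcat μ p' hcomp
        have hzorb : bcat μ p' hcomp ∈ orbit x := mem_orbit_of_isCat_right hz hp'orb
        rw [act_pathElem sp hp'orb hzorb hz]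
        have l1 : TailEqLag (bcat μ p' hcomp) p' ((μ.edges.length : ℕ) : ℤ) :=
          tailEqLag_of_isCat hz
        have l2 : TailEqLag p' (p : G.BPath) (-((ν.edges.length : ℕ) : ℤ)) := by
          simpa [FinPath.length] using tailEqLag_symm (tailEqLag_of_isCat hp')
        have l3 := tailEqLag_trans l1 (tailEqLag_trans l2 hpk)
        have harith : ((μ.edges.length : ℕ) : ℤ) + (-((ν.edges.length : ℕ) : ℤ) + k)
            = m + k := by
          simp only [FinPath.length] at hlag
          omega
        rw [harith] at l3
        exact Submodule.subset_span ⟨⟨bcat μ p' hcomp, hzorb⟩, l3, rfl⟩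
      · rw [show sp.basis p = sp.basis ⟨(p : G.BPath), p.2⟩ from rfl,
          act_pathStar_zero sp p.2 hex, smul_zero]
        exact Submodule.zero_mem _
    | zero =>
      rw [smul_zero]
      exact Submodule.zero_mem _
    | add u v hu hv ihu ihv =>
      rw [smul_add]
      exact add_mem ihu ihv
    | smul r u hu ihu =>
      rw [lpa_smul_comm]
      exact Submodule.smul_mem _ r ihu
  | zero =>
    rw [zero_smul]
    exact Submodule.zero_mem _
  | add a1 a2 h1 h2 ih1 ih2 =>
    rw [add_smul]
    exact add_mem (ih1 y hy) (ih2 y hy)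
  | smul r a hmem ih =>
    rw [smul_assoc]
    exact Submodule.smul_mem _ r (ih y hy)

end Main

end DirGraph

open DirGraph

/-- for `x ∈ ∂E`, the simple `L_K(E)`-module `V_{[x]}` admits a
`ℤ`-grading making it a graded `L_K(E)`-module if and only if `x` is not a rational
path. -/
theorem stmt_10 (G : DirGraph) (K : Type) [Field K] (x : G.BPath)
    (M : Type) [AddCommGroup M] [Module K M] [Module (LPA G K) M]
    [IsScalarTower K (LPA G K) M]
    (sp : ChenSpec G K (fun _ => 1) x M) :
    (∃ W : ℤ → Submodule K M, IsModuleGrading G K M W) ↔ ¬ IsRational x := by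
  constructor
  · rintro ⟨W, hInt, hAct⟩ hrat
    exact forward_dir sp W hInt hAct hrat
  · intro hnr
    exact ⟨chenW sp.basis, backward_internal sp hnr,
      fun m k a y ha hy => backward_action sp m k a y ha hy⟩
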